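/- Counting connected sets at prescribed horizontal distance from a set (Lemma 3): Let A ⊂ ℤ² be finite. For all integers s ≥ 2 and 1 ≤ d < ∞, the number of subsets S ⊂ ℤ² that are connected (as subgraphs of ℤ²), have |S| = s and satisfy dist_h(S,A) = d, is at most (32/3)·|A|·4^{4s}. -/

import Mathlib

open scoped BigOperators Classical

noncomputable section

abbrev Site : Type := ℤ × ℤ

/-! ## Connectivity in the lattice `ℤ²` -/

/-- The nearest-neighbour graph on `ℤ²`. -/
def gridGraph : SimpleGraph Site where
  Adj x y := |x.1 - y.1| + |x.2 - y.2| = 1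
  symm := by
    constructor
    intro x y h
    show |y.1 - x.1| + |y.2 - x.2| = 1
    change |x.1 - y.1| + |x.2 - y.2| = 1 at h
    rw [abs_sub_comm y.1 x.1, abs_sub_comm y.2 x.2]
    exact h
  loopless := by constructor; intro x h; simp at h

/-- `S` is connected as a subgraph of `ℤ²`. -/
def ConnectedIn (S : Finset Site) : Prop :=
  (SimpleGraph.induce (↑S : Set Site) gridGraph).Connected

/-- `dist_h(S,A) = d`: the horizontal distance between `S` and `A`
(`dist_h(x,y) = |x_h − y_h|` if `x_v = y_v`, `+∞` otherwise, minimised over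
pairs) equals `d`. -/
def hDistEq (S A : Finset Site) (d : ℕ) : Prop :=
  (∃ x ∈ S, ∃ y ∈ A, x.2 = y.2 ∧ (x.1 - y.1).natAbs = d) ∧
  (∀ x ∈ S, ∀ y ∈ A, x.2 = y.2 → d ≤ (x.1 - y.1).natAbs)

/-- One step in a direction code: 0=right,1=left,2=up,3=down,4=stay. -/
def stepD (p : Site) (c : Fin 5) : Site :=
  if c = 0 then (p.1 + 1, p.2) else if c = 1 then (p.1 - 1, p.2)
  else if c = 2 then (p.1, p.2 + 1) else if c = 3 then (p.1, p.2 - 1) else p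

def endPt (x : Site) (l : List (Fin 5)) : Site := l.foldl stepD x

def visit (x : Site) : List (Fin 5) → Finset Site
  | [] => {x}
  | c :: l => insert x (visit (stepD x c) l)

@[simp] lemma endPt_nil (x : Site) : endPt x [] = x := rfl
@[simp] lemma endPt_cons (x : Site) (c : Fin 5) (l : List (Fin 5)) :
    endPt x (c :: l) = endPt (stepD x c) l := rfl
@[simp] lemma endPt_append (x : Site) (l₁ l₂ : List (Fin 5)) :
    endPt x (l₁ ++ l₂) = endPt (endPt x l₁) l₂ := List.foldl_append ..

@[simp] lemma visit_nil (x : Site) : visit x [] = {x} := rfl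
@[simp] lemma visit_cons (x : Site) (c : Fin 5) (l : List (Fin 5)) :
    visit x (c :: l) = insert x (visit (stepD x c) l) := rfl

lemma mem_visit_self (x : Site) (l : List (Fin 5)) : x ∈ visit x l := by
  cases l with
  | nil => simp
  | cons c l => simp

lemma visit_append (x : Site) (l₁ l₂ : List (Fin 5)) :
    visit x (l₁ ++ l₂) = visit x l₁ ∪ visit (endPt x l₁) l₂ := by
  induction l₁ generalizing x with
  | nil =>
    simp only [List.nil_append, visit_nil, endPt_nil]
    exact (Finset.union_eq_right.2 (Finset.singleton_subset_iff.2 (mem_visit_self x l₂))).symm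
  | cons c l₁ ih =>
    simp [ih, Finset.insert_union]

lemma endPt_mem_visit (x : Site) (l : List (Fin 5)) : endPt x l ∈ visit x l := by
  induction l generalizing x with
  | nil => simp
  | cons c l ih => simpa using Finset.mem_insert_of_mem (ih (stepD x c))

lemma mem_visit_split {u x : Site} {l : List (Fin 5)} (h : u ∈ visit x l) :
    ∃ l₁ l₂, l = l₁ ++ l₂ ∧ endPt x l₁ = u := by
  induction l generalizing x with
  | nil => exact ⟨[], [], rfl, by simpa using (Finset.mem_singleton.1 h).symm⟩
  | cons c l ih =>
    rcases Finset.mem_insert.1 h with h | h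
    · exact ⟨[], c :: l, rfl, h.symm⟩
    · obtain ⟨l₁, l₂, h1, h2⟩ := ih h
      exact ⟨c :: l₁, l₂, by rw [h1]; rfl, h2⟩

@[simp] lemma stepD_four (p : Site) : stepD p 4 = p := rfl

lemma visit_replicate (x : Site) (k : ℕ) : visit x (List.replicate k 4) = {x} := by
  induction k with
  | zero => rfl
  | succ k ih => simp [List.replicate_succ, ih]

lemma exists_dir {a b : Site} (h : |a.1 - b.1| + |a.2 - b.2| = 1) :
    ∃ c : Fin 5, stepD a c = b := by
  rw [Int.abs_eq_natAbs, Int.abs_eq_natAbs] at h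
  have h' : (b.1 = a.1 + 1 ∧ b.2 = a.2) ∨ (b.1 = a.1 - 1 ∧ b.2 = a.2) ∨
      (b.2 = a.2 + 1 ∧ b.1 = a.1) ∨ (b.2 = a.2 - 1 ∧ b.1 = a.1) := by omega
  rcases h' with ⟨h1, h2⟩ | ⟨h1, h2⟩ | ⟨h1, h2⟩ | ⟨h1, h2⟩
  · exact ⟨0, by simp [stepD]; simp [Prod.ext_iff, h1, h2]⟩
  · exact ⟨1, by simp [stepD]; simp [Prod.ext_iff, h1, h2]⟩
  · exact ⟨2, by simp [stepD]; simp [Prod.ext_iff, h1, h2]⟩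
  · exact ⟨3, by simp [stepD]; simp [Prod.ext_iff, h1, h2]⟩

lemma adj_of_step {u v : Site} {c : Fin 5} (h : stepD u c = v) (hne : u ≠ v) :
    |v.1 - u.1| + |v.2 - u.2| = 1 := by
  subst h
  fin_cases c <;> simp [stepD] <;> exact absurd rfl hne


/-- Key covering lemma: a connected set `S` containing `x` is the visited set
of some direction list of length at most `2(|S|-1)`. -/
lemma cover_lemma : ∀ (n : ℕ) (S : Finset Site) (x : Site), S.card = n → x ∈ S →
    (∀ y ∈ S, ∃ l, endPt x l = y ∧ visit x l ⊆ S) →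
    ∃ l, visit x l = S ∧ l.length ≤ 2 * (S.card - 1) := by
  intro n
  induction n using Nat.strong_induction_on with
  | _ n ih =>
    intro S x hcard hx hconn
    by_cases hsx : S = {x}
    · exact ⟨[], by simp [hsx], by simp⟩
    have hy : ∃ y ∈ S, y ≠ x := by
      by_contra hcon
      push_neg at hcon
      exact hsx (Finset.eq_singleton_iff_unique_mem.2 ⟨hx, fun y hy => hcon y hy⟩)
    obtain ⟨y₀, hy₀S, hy₀x⟩ := hy
    set P : Site → ℕ → Prop :=
      fun y k => ∃ l : List (Fin 5), l.length = k ∧ endPt x l = y ∧ visit x l ⊆ S with hP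
    set dd : Site → ℕ := fun y => sInf {k | P y k} with hdd
    have hdmem : ∀ y ∈ S, P y (dd y) := by
      intro y hyS
      obtain ⟨l, hl1, hl2⟩ := hconn y hyS
      exact Nat.sInf_mem (⟨l.length, ⟨l, rfl, hl1, hl2⟩⟩ : {k | P y k}.Nonempty)
    have hdle : ∀ y k, P y k → dd y ≤ k := fun y k hk => Nat.sInf_le hk
    have hdx : dd x = 0 := Nat.le_zero.1 (hdle x 0 ⟨[], rfl, rfl, by simpa using hx⟩)
    have hdpos : ∀ y ∈ S, y ≠ x → 1 ≤ dd y := by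
      intro y hyS hyx
      rcases Nat.eq_zero_or_pos (dd y) with h0 | h1
      · obtain ⟨l, hl0, hl1, _⟩ := hdmem y hyS
        rw [h0] at hl0
        rw [List.length_eq_zero_iff.1 hl0] at hl1
        exact absurd hl1.symm hyx
      · exact h1
    obtain ⟨v, hvS, hvmax⟩ := Finset.exists_max_image S dd ⟨x, hx⟩
    have hvx : v ≠ x := by
      intro h
      have h1 := hdpos y₀ hy₀S hy₀x
      have h2 := hvmax y₀ hy₀S
      rw [h, hdx] at h2
      omega
    have havoid : ∀ u ∈ S, u ≠ v → ∀ l : List (Fin 5), l.length = dd u →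
        endPt x l = u → visit x l ⊆ S → v ∉ visit x l := by
      intro u huS huv l hlen hend hsub hvmem
      obtain ⟨l₁, l₂, hsplit, hend₁⟩ := mem_visit_split hvmem
      have hl₂ : l₂ ≠ [] := by
        rintro rfl
        rw [List.append_nil] at hsplit
        rw [← hsplit] at hend₁
        exact huv (by rw [← hend]; exact hend₁)
      have hsub₁ : visit x l₁ ⊆ S := by
        rw [hsplit, visit_append] at hsub
        exact fun a ha => hsub (Finset.mem_union_left _ ha)
      have hdv : dd v ≤ l₁.length := hdle v l₁.length ⟨l₁, rfl, hend₁, hsub₁⟩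
      have hll : l₁.length < l.length := by
        rw [hsplit, List.length_append]
        have := List.length_pos_iff.2 hl₂
        omega
      have hud : dd u ≤ dd v := hvmax u huS
      omega
    have hxS' : x ∈ S.erase v := Finset.mem_erase.2 ⟨fun h => hvx h.symm, hx⟩
    have hconn' : ∀ u ∈ S.erase v, ∃ l, endPt x l = u ∧ visit x l ⊆ S.erase v := by
      intro u huS'
      obtain ⟨huv, huS⟩ := Finset.mem_erase.1 huS'
      obtain ⟨l, hlen, hend, hsub⟩ := hdmem u huS
      exact ⟨l, hend, Finset.subset_erase.2 ⟨hsub, havoid u huS huv l hlen hend hsub⟩⟩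
    have hcard' : (S.erase v).card = n - 1 := by rw [Finset.card_erase_of_mem hvS, hcard]
    have hn2 : 2 ≤ n := by
      rw [← hcard]
      exact Finset.one_lt_card.2 ⟨x, hx, v, hvS, fun h => hvx h.symm⟩
    obtain ⟨l₀, hvis₀, hlen₀⟩ := ih (n - 1) (by omega) (S.erase v) x hcard' hxS' hconn'
    obtain ⟨lv, hlvlen, hlvend, hlvsub⟩ := hdmem v hvS
    have hlvne : lv ≠ [] := by
      rintro rfl
      exact hvx (show v = x by simpa using hlvend.symm)
    obtain ⟨l', c, rfl⟩ := List.eq_nil_or_concat lv |>.resolve_left hlvne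
    rw [List.concat_eq_append] at hlvlen hlvend hlvsub
    set u : Site := endPt x l' with hu
    have hstep : stepD u c = v := by
      rw [← hlvend, endPt_append]; rfl
    have huS : u ∈ S :=
      hlvsub (by rw [visit_append]; exact Finset.mem_union_left _ (endPt_mem_visit x l'))
    have hsubl' : visit x l' ⊆ S := by
      rw [visit_append] at hlvsub
      exact fun a ha => hlvsub (Finset.mem_union_left _ ha)
    have huv : u ≠ v := by
      intro h
      have hw : dd v ≤ l'.length := hdle v _ ⟨l', rfl, hu.symm.trans h, hsubl'⟩
      have hl : l'.length + 1 = dd v := by simpa using hlvlen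
      omega
    have huS' : u ∈ S.erase v := Finset.mem_erase.2 ⟨huv, huS⟩
    obtain ⟨c', hstep'⟩ := exists_dir (a := v) (b := u) (adj_of_step hstep huv)
    have humem : u ∈ visit x l₀ := hvis₀ ▸ huS'
    obtain ⟨l₁, l₂, rfl, hend₁⟩ := mem_visit_split humem
    rw [visit_append, hend₁] at hvis₀
    refine ⟨l₁ ++ c :: c' :: l₂, ?_, ?_⟩
    · rw [visit_append, hend₁, visit_cons, hstep, visit_cons, hstep']
      rw [Finset.union_insert, Finset.union_insert, hvis₀, Finset.insert_erase hvS,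
        Finset.insert_eq_self.2 huS]
    · rw [hcard'] at hlen₀
      simp only [List.length_append, List.length_cons] at hlen₀ ⊢
      rw [hcard]
      omega

lemma walk_to_list {S : Finset Site} :
    ∀ {a b : (↑S : Set Site)}
      (_ : (SimpleGraph.induce (↑S : Set Site) gridGraph).Walk a b),
      ∃ l, endPt a.val l = b.val ∧ visit a.val l ⊆ S := by
  intro a b w
  induction w with
  | nil =>
    exact ⟨[], rfl, by simpa using a.2⟩
  | @cons p q r h w ih =>
    obtain ⟨l, h1, h2⟩ := ih
    have hadj : gridGraph.Adj p.val q.val := h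
    obtain ⟨c, hc⟩ := exists_dir (a := p.val) (b := q.val) hadj
    refine ⟨c :: l, ?_, ?_⟩
    · rw [endPt_cons, hc]; exact h1
    · rw [visit_cons, hc]
      exact Finset.insert_subset (by simpa using p.2) h2

lemma conn_to_lists {S : Finset Site} (hS : ConnectedIn S) {x : Site} (hx : x ∈ S) :
    ∀ y ∈ S, ∃ l, endPt x l = y ∧ visit x l ⊆ S := by
  intro y hy
  have hr := hS.preconnected ⟨x, by simpa using hx⟩ ⟨y, by simpa using hy⟩
  obtain ⟨w⟩ := hr
  exact walk_to_list w


/-- **Lemma 3 (counting connected sets at prescribed horizontal distance from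
a set).** Let `A ⊂ ℤ²` be finite. For all `s ≥ 2` and `1 ≤ d < ∞`, the number
of connected subsets `S ⊂ ℤ²` with `|S| = s` and `dist_h(S,A) = d` is at most
`(32/3)·|A|·4^{4s}`. -/
theorem count_connected_at_hdist (A : Finset Site) (s d : ℕ)
    (hs : 2 ≤ s) (hd : 1 ≤ d) :
    {S : Finset Site | ConnectedIn S ∧ S.card = s ∧ hDistEq S A d}.Finite ∧
    ({S : Finset Site | ConnectedIn S ∧ S.card = s ∧ hDistEq S A d}.ncard : ℝ) ≤
      32 / 3 * (A.card : ℝ) * 4 ^ (4 * s) := by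
  classical
  set anchors : Finset Site :=
    A.image (fun y => (y.1 + (d : ℤ), y.2)) ∪ A.image (fun y => (y.1 - (d : ℤ), y.2)) with hanch
  set L : ℕ := 2 * s with hL
  set T : Finset (Finset Site) :=
    (anchors ×ˢ (Finset.univ : Finset (Fin L → Fin 5))).image
      (fun p => visit p.1 (List.ofFn p.2)) with hT
  have hsub : {S : Finset Site | ConnectedIn S ∧ S.card = s ∧ hDistEq S A d} ⊆ ↑T := by
    intro S hSmem
    obtain ⟨hcS, hcard, ⟨⟨x, hxS, y, hyA, hxy2, hxy1⟩, _⟩⟩ := hSmem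
    -- x is an anchor
    have hxa : x ∈ anchors := by
      have : x.1 = y.1 + (d : ℤ) ∨ x.1 = y.1 - (d : ℤ) := by omega
      rcases this with h | h
      · exact Finset.mem_union_left _ (Finset.mem_image.2 ⟨y, hyA,
          by rw [← h, ← hxy2]⟩)
      · exact Finset.mem_union_right _ (Finset.mem_image.2 ⟨y, hyA,
          by rw [← h, ← hxy2]⟩)
    -- covering list
    obtain ⟨l, hvis, hlen⟩ := cover_lemma S.card S x rfl hxS (conn_to_lists hcS hxS)
    have hlenL : l.length ≤ L := by rw [hL]; omega
    set lp : List (Fin 5) := l ++ List.replicate (L - l.length) 4 with hlp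
    have hlplen : lp.length = L := by simp [hlp]; omega
    have hlpvis : visit x lp = S := by
      rw [hlp, visit_append, visit_replicate, ← hvis]
      exact Finset.union_eq_left.2 (Finset.singleton_subset_iff.2 (endPt_mem_visit x l))
    refine Finset.mem_coe.2 (Finset.mem_image.2 ⟨(x, fun i => lp.get (Fin.cast hlplen.symm i)), ?_, ?_⟩)
    · exact Finset.mem_product.2 ⟨hxa, Finset.mem_univ _⟩
    · have : List.ofFn (fun i => lp.get (Fin.cast hlplen.symm i)) = lp := by
        apply List.ext_get
        · simp [hlplen]
        · intro i h1 h2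
          simp [List.get_ofFn]
      rw [this, hlpvis]
  have hfin : {S : Finset Site | ConnectedIn S ∧ S.card = s ∧ hDistEq S A d}.Finite :=
    Set.Finite.subset T.finite_toSet hsub
  refine ⟨hfin, ?_⟩
  have hncard : {S : Finset Site | ConnectedIn S ∧ S.card = s ∧ hDistEq S A d}.ncard ≤ T.card := by
    rw [← Set.ncard_coe_finset]
    exact Set.ncard_le_ncard hsub T.finite_toSet
  have hTcard : T.card ≤ 2 * A.card * 5 ^ L := by
    calc T.card ≤ (anchors ×ˢ (Finset.univ : Finset (Fin L → Fin 5))).card :=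
          Finset.card_image_le
      _ = anchors.card * 5 ^ L := by
          rw [Finset.card_product]
          simp [Fintype.card_fun]
      _ ≤ 2 * A.card * 5 ^ L := by
          have : anchors.card ≤ 2 * A.card := by
            calc anchors.card ≤ (A.image (fun y => (y.1 + (d : ℤ), y.2))).card
                + (A.image (fun y => (y.1 - (d : ℤ), y.2))).card := Finset.card_union_le _ _
              _ ≤ 2 * A.card := by
                  have h1 := Finset.card_image_le (s := A) (f := fun y => (y.1 + (d : ℤ), y.2))
                  have h2 := Finset.card_image_le (s := A) (f := fun y => (y.1 - (d : ℤ), y.2))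
                  omega
          exact Nat.mul_le_mul_right _ this
  have hchain : ({S : Finset Site | ConnectedIn S ∧ S.card = s ∧ hDistEq S A d}.ncard : ℝ)
      ≤ (2 * A.card * 5 ^ L : ℕ) := by
    exact_mod_cast le_trans hncard hTcard
  refine le_trans hchain ?_
  push_cast
  rw [hL]
  have h256 : (4 : ℝ) ^ (4 * s) = 256 ^ s := by
    rw [show 4 * s = 4 * s from rfl, pow_mul]; norm_num
  have h25 : (5 : ℝ) ^ (2 * s) = 25 ^ s := by rw [pow_mul]; norm_num
  rw [h256, h25]
  have hbase : (25 : ℝ) ^ s ≤ 256 ^ s := pow_le_pow_left₀ (by norm_num) (by norm_num) s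
  have hA : (0 : ℝ) ≤ A.card := Nat.cast_nonneg _
  nlinarith [pow_nonneg (show (0:ℝ) ≤ 25 by norm_num) s, pow_nonneg (show (0:ℝ) ≤ 256 by norm_num) s]
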